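/- Any two linear functionals tr, tr' : TL_n(d) → ℂ satisfying (1) tr(1) = 1, (2) tr(XY) = tr(YX) for all X, Y, and (3) tr(X·E_{n-1}) = (1/d)·tr(X) for all X in the subalgebra TL_{n-1}(d) (and similarly at each level of the natural inclusion chain TL_1 ⊂ TL_2 ⊂ ... ⊂ TL_n), are equal. -/
import Mathlib


/-- Uniqueness of the Markov trace.  Any two linear functionals on
`TL_n(d)` (formalized as the subalgebra generated by elements `E_1,...,E_{n-1}`
satisfying the Temperley-Lieb relations) satisfying (1) `tr 1 = 1`,
(2) `tr(XY) = tr(YX)`, and (3) the Markov property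
`tr(X·E_{m-1}) = (1/d)·tr(X)` for `X ∈ TL_{m-1}(d)` at every level `m ≤ n`,
are equal (on `TL_n(d)`). -/
theorem markov_trace_unique
    {R : Type*} [Ring R] [Algebra ℂ R] (n : ℕ) (d : ℂ) (hd : d ≠ 0)
    (E : ℕ → R)
    (hcomm : ∀ i j, 1 ≤ i → i ≤ n - 1 → 1 ≤ j → j ≤ n - 1 →
      (i + 2 ≤ j ∨ j + 2 ≤ i) → E i * E j = E j * E i)
    (hEiE : ∀ i, 1 ≤ i → i + 1 ≤ n - 1 → E i * E (i + 1) * E i = E i)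
    (hEiE' : ∀ i, 1 ≤ i → i + 1 ≤ n - 1 → E (i + 1) * E i * E (i + 1) = E (i + 1))
    (hsq : ∀ i, 1 ≤ i → i ≤ n - 1 → E i * E i = d • E i)
    (tr tr' : R →ₗ[ℂ] ℂ)
    (h1 : tr 1 = 1) (h1' : tr' 1 = 1)
    (h2 : ∀ X Y : R, tr (X * Y) = tr (Y * X))
    (h2' : ∀ X Y : R, tr' (X * Y) = tr' (Y * X))
    (h3 : ∀ m : ℕ, 2 ≤ m → m ≤ n →
      ∀ X ∈ Algebra.adjoin ℂ (E '' {i | 1 ≤ i ∧ i ≤ m - 2}),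
        tr (X * E (m - 1)) = d⁻¹ * tr X)
    (h3' : ∀ m : ℕ, 2 ≤ m → m ≤ n →
      ∀ X ∈ Algebra.adjoin ℂ (E '' {i | 1 ≤ i ∧ i ≤ m - 2}),
        tr' (X * E (m - 1)) = d⁻¹ * tr' X) :
    ∀ X ∈ Algebra.adjoin ℂ (E '' {i | 1 ≤ i ∧ i ≤ n - 1}), tr X = tr' X := by
  classical
  -- the chain of subalgebras
  set T : ℕ → Subalgebra ℂ R := fun k => Algebra.adjoin ℂ (E '' {i | 1 ≤ i ∧ i ≤ k}) with hTdef
  have Tmono : ∀ {j k : ℕ}, j ≤ k → T j ≤ T k := by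
    intro j k hjk
    exact Algebra.adjoin_mono (Set.image_mono (fun i hi => ⟨hi.1, hi.2.trans hjk⟩))
  have TE : ∀ i k : ℕ, 1 ≤ i → i ≤ k → E i ∈ T k := fun i k h1i hik =>
    Algebra.subset_adjoin ⟨i, ⟨h1i, hik⟩, rfl⟩
  -- T 0 is the scalars
  have T0 : ∀ x ∈ T 0, ∃ c : ℂ, x = algebraMap ℂ R c := by
    intro x hx
    have hset : (E '' {i | 1 ≤ i ∧ i ≤ 0}) = (∅ : Set R) := by
      have : {i : ℕ | 1 ≤ i ∧ i ≤ 0} = (∅ : Set ℕ) := by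
        ext i; simp only [Set.mem_setOf_eq, Set.mem_empty_iff_false, iff_false]; omega
      rw [this, Set.image_empty]
    rw [hTdef] at hx
    simp only [hset, Algebra.adjoin_empty, Algebra.mem_bot, Set.mem_range] at hx
    obtain ⟨c, hc⟩ := hx
    exact ⟨c, hc.symm⟩
  -- commutation of low generators with E k
  have comm : ∀ k j : ℕ, 1 ≤ k → k ≤ n - 1 → j + 2 ≤ k → ∀ z ∈ T j, E k * z = z * E k := by
    intro k j hk1 hkn hj z hz
    induction hz using Algebra.adjoin_induction with
    | mem x hx =>
      obtain ⟨i, ⟨h1i, hij⟩, rfl⟩ := hx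
      exact (hcomm i k h1i (by omega) (by omega) hkn (Or.inl (by omega))).symm
    | algebraMap c => exact (Algebra.commutes c (E k)).symm
    | add x y hx hy ihx ihy => rw [mul_add, add_mul, ihx, ihy]
    | mul x y hx hy ihx ihy => rw [← mul_assoc, ihx, mul_assoc, ihy, mul_assoc]
  -- the "word" set and span
  set W : ℕ → Set R := fun k => {x | ∃ a ∈ T (k - 1), ∃ b ∈ T (k - 1), x = a * E k * b} with hWdef
  set Q : ℕ → Submodule ℂ R := fun k => Submodule.span ℂ (W k) with hQdef
  set P : ℕ → Submodule ℂ R := fun k => Subalgebra.toSubmodule (T (k - 1)) with hPdef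
  have Wmem : ∀ k : ℕ, ∀ a ∈ T (k - 1), ∀ b ∈ T (k - 1), a * E k * b ∈ Q k := by
    intro k a ha b hb
    exact Submodule.subset_span ⟨a, ha, b, hb, rfl⟩
  -- Q k is stable under multiplication by T (k-1) on both sides
  have Qleft : ∀ k : ℕ, ∀ c ∈ T (k - 1), ∀ q ∈ Q k, c * q ∈ Q k := by
    intro k c hc q hq
    induction hq using Submodule.span_induction with
    | mem w hw =>
      obtain ⟨a, ha, b, hb, rfl⟩ := hw
      have : c * (a * E k * b) = (c * a) * E k * b := by noncomm_ring
      rw [this]; exact Wmem k _ (mul_mem hc ha) _ hb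
    | zero => rw [mul_zero]; exact zero_mem _
    | add x y hx hy ihx ihy => rw [mul_add]; exact add_mem ihx ihy
    | smul a x hx ihx => rw [mul_smul_comm]; exact Submodule.smul_mem _ _ ihx
  have Qright : ∀ k : ℕ, ∀ c ∈ T (k - 1), ∀ q ∈ Q k, q * c ∈ Q k := by
    intro k c hc q hq
    induction hq using Submodule.span_induction with
    | mem w hw =>
      obtain ⟨a, ha, b, hb, rfl⟩ := hw
      have : (a * E k * b) * c = a * E k * (b * c) := by noncomm_ring
      rw [this]; exact Wmem k _ ha _ (mul_mem hb hc)
    | zero => rw [zero_mul]; exact zero_mem _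
    | add x y hx hy ihx ihy => rw [add_mul]; exact add_mem ihx ihy
    | smul a x hx ihx => rw [smul_mul_assoc]; exact Submodule.smul_mem _ _ ihx
  -- structure theorem: T k ⊆ P k ⊔ Q k
  have struct : ∀ k : ℕ, 1 ≤ k → k ≤ n - 1 → ∀ x ∈ T k, x ∈ P k ⊔ Q k := by
    intro k
    induction k using Nat.strong_induction_on with
    | _ k IH =>
      intro hk1 hkn x hx
      -- key computation : E k * z * E k ∈ Q k for z ∈ T (k-1)
      have key : ∀ z ∈ T (k - 1), E k * z * E k ∈ Q k := by
        intro z hz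
        rcases Nat.lt_or_ge k 2 with hk2 | hk2
        · -- k = 1
          have hk : k = 1 := by omega
          subst hk
          obtain ⟨c, rfl⟩ := T0 z hz
          have : E 1 * algebraMap ℂ R c * E 1 = (c * d) • (1 * E 1 * 1) := by
            rw [Algebra.algebraMap_eq_smul_one, mul_smul_comm, mul_one,
              smul_mul_assoc, hsq 1 le_rfl hkn, smul_smul, one_mul, mul_one]
          rw [this]
          exact Submodule.smul_mem _ _ (Wmem 1 1 (one_mem _) 1 (one_mem _))
        · -- k ≥ 2 : use the structure theorem one level down
          obtain ⟨j, rfl⟩ : ∃ j, k = j + 1 := ⟨k - 1, by omega⟩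
          have hj1 : 1 ≤ j := by omega
          have hjn : j ≤ n - 1 := by omega
          have hz' := IH j (by omega) hj1 hjn z hz
          rcases Submodule.mem_sup.mp hz' with ⟨p, hp, q, hq, rfl⟩
          clear hz hz'
          have hpT : p ∈ T (j - 1) := hp
          rw [mul_add, add_mul]
          refine add_mem ?_ ?_
          · -- scalar-level part: E k commutes with p
            have hcp : E (j + 1) * p = p * E (j + 1) :=
              comm (j + 1) (j - 1) (by omega) hkn (by omega) p hpT
            have hpj : p ∈ T j := Tmono (by omega) hpT
            have : E (j + 1) * p * E (j + 1) = d • (p * E (j + 1) * 1) := by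
              rw [hcp, mul_assoc, hsq (j + 1) (by omega) hkn, mul_one, mul_smul_comm]
            rw [this]
            exact Submodule.smul_mem _ _ (Wmem (j + 1) p hpj 1 (one_mem _))
          · -- word part: use E_{k} E_{k-1} E_{k} = E_{k}
            induction hq using Submodule.span_induction with
            | mem w hw =>
              obtain ⟨a, ha, b, hb, rfl⟩ := hw
              have haT : a ∈ T (j - 1) := ha
              have hbT : b ∈ T (j - 1) := hb
              have hca : E (j + 1) * a = a * E (j + 1) :=
                comm (j + 1) (j - 1) (by omega) hkn (by omega) a haT
              have hcb : E (j + 1) * b = b * E (j + 1) :=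
                comm (j + 1) (j - 1) (by omega) hkn (by omega) b hbT
              have hE : E (j + 1) * E j * E (j + 1) = E (j + 1) := hEiE' j hj1 hkn
              have : E (j + 1) * (a * E j * b) * E (j + 1) = a * E (j + 1) * b := by
                calc E (j + 1) * (a * E j * b) * E (j + 1)
                    = (E (j + 1) * a) * (E j * (b * E (j + 1))) := by noncomm_ring
                  _ = (a * E (j + 1)) * (E j * (E (j + 1) * b)) := by rw [hca, ← hcb]
                  _ = a * ((E (j + 1) * E j * E (j + 1)) * b) := by noncomm_ring
                  _ = a * (E (j + 1) * b) := by rw [hE]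
                  _ = a * E (j + 1) * b := by rw [mul_assoc]
              rw [this]
              exact Wmem (j + 1) a (Tmono (by omega) haT) b (Tmono (by omega) hbT)
            | zero => rw [mul_zero, zero_mul]; exact zero_mem _
            | add x y hx hy ihx ihy =>
              have : E (j + 1) * (x + y) * E (j + 1) =
                  E (j + 1) * x * E (j + 1) + E (j + 1) * y * E (j + 1) := by noncomm_ring
              rw [this]; exact add_mem ihx ihy
            | smul c x hx ihx =>
              have : E (j + 1) * (c • x) * E (j + 1) = c • (E (j + 1) * x * E (j + 1)) := by
                rw [mul_smul_comm, smul_mul_assoc]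
              rw [this]; exact Submodule.smul_mem _ _ ihx
      -- multiplicative closure of P k ⊔ Q k
      have mulPQ : ∀ p ∈ T (k - 1), ∀ q ∈ Q k, p * q ∈ Q k := Qleft k
      have mulWS : ∀ a ∈ T (k - 1), ∀ b ∈ T (k - 1), ∀ y ∈ P k ⊔ Q k,
          (a * E k * b) * y ∈ P k ⊔ Q k := by
        intro a ha b hb y hy
        rcases Submodule.mem_sup.mp hy with ⟨p', hp', q', hq', rfl⟩
        clear hy
        rw [mul_add]
        refine add_mem (Submodule.mem_sup_right ?_) (Submodule.mem_sup_right ?_)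
        · have : (a * E k * b) * p' = a * E k * (b * p') := by noncomm_ring
          rw [this]; exact Wmem k a ha _ (mul_mem hb hp')
        · -- product of two words
          induction hq' using Submodule.span_induction with
          | mem w hw =>
            obtain ⟨a', ha', b', hb', rfl⟩ := hw
            have hkey := key (b * a') (mul_mem hb ha')
            have : (a * E k * b) * (a' * E k * b') =
                (a * (E k * (b * a') * E k)) * b' := by noncomm_ring
            rw [this]
            exact Qright k b' hb' _ (Qleft k a ha _ hkey)
          | zero => rw [mul_zero]; exact zero_mem _
          | add x y hx hy ihx ihy => rw [mul_add]; exact add_mem ihx ihy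
          | smul c x hx ihx => rw [mul_smul_comm]; exact Submodule.smul_mem _ _ ihx
      have mulmem : ∀ x ∈ P k ⊔ Q k, ∀ y ∈ P k ⊔ Q k, x * y ∈ P k ⊔ Q k := by
        intro x hx y hy
        rcases Submodule.mem_sup.mp hx with ⟨p, hp, q, hq, rfl⟩
        clear hx
        rw [add_mul]
        have hpT : p ∈ T (k - 1) := hp
        refine add_mem ?_ ?_
        · -- p * y
          rcases Submodule.mem_sup.mp hy with ⟨p', hp', q', hq', rfl⟩
          have hpT' : p' ∈ T (k - 1) := hp'
          rw [mul_add]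
          have hpp : p * p' ∈ T (k - 1) := mul_mem hpT hpT'
          exact add_mem
            (Submodule.mem_sup_left ((Subalgebra.mem_toSubmodule _).mpr hpp))
            (Submodule.mem_sup_right (mulPQ p hpT q' hq'))
        · -- q * y
          induction hq using Submodule.span_induction with
          | mem w hw =>
            obtain ⟨a, ha, b, hb, rfl⟩ := hw
            exact mulWS a ha b hb y hy
          | zero => rw [zero_mul]; exact zero_mem _
          | add x' y' hx' hy' ihx ihy => rw [add_mul]; exact add_mem ihx ihy
          | smul c x' hx' ihx => rw [smul_mul_assoc]; exact Submodule.smul_mem _ _ ihx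
      -- now the adjoin induction
      induction hx using Algebra.adjoin_induction with
      | mem x hx =>
        obtain ⟨i, ⟨h1i, hik⟩, rfl⟩ := hx
        rcases eq_or_lt_of_le hik with hik' | hik'
        · subst hik'
          have : E i = 1 * E i * 1 := by rw [one_mul, mul_one]
          rw [this]
          exact Submodule.mem_sup_right (Wmem i 1 (one_mem _) 1 (one_mem _))
        · exact Submodule.mem_sup_left (TE i (k - 1) h1i (by omega))
      | algebraMap c => exact Submodule.mem_sup_left (algebraMap_mem (T (k - 1)) c)
      | add x y hx hy ihx ihy => exact add_mem ihx ihy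
      | mul x y hx hy ihx ihy => exact mulmem x ihx y ihy
  -- main induction: traces agree on T k
  have main : ∀ k : ℕ, k ≤ n - 1 → ∀ X ∈ T k, tr X = tr' X := by
    intro k
    induction k with
    | zero =>
      intro _ X hX
      obtain ⟨c, rfl⟩ := T0 X hX
      rw [Algebra.algebraMap_eq_smul_one, map_smul, map_smul, h1, h1']
    | succ k IH =>
      intro hk X hX
      have hk' : k ≤ n - 1 := by omega
      have hs := struct (k + 1) (by omega) hk X hX
      rcases Submodule.mem_sup.mp hs with ⟨p, hp, q, hq, rfl⟩
      clear hs hX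
      have hpT : p ∈ T k := hp
      rw [map_add, map_add, IH hk' p hpT]
      congr 1
      -- tr q = tr' q
      induction hq using Submodule.span_induction with
      | mem w hw =>
        obtain ⟨a, ha, b, hb, rfl⟩ := hw
        have haT : a ∈ T k := ha
        have hbT : b ∈ T k := hb
        have hba : b * a ∈ T k := mul_mem hbT haT
        have hm2 : (2 : ℕ) ≤ k + 2 := by omega
        have hmn : k + 2 ≤ n := by omega
        have e1 : tr (a * E (k + 1) * b) = d⁻¹ * tr (b * a) := by
          rw [h2 (a * E (k + 1)) b, ← mul_assoc]
          exact h3 (k + 2) hm2 hmn (b * a) hba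
        have e2 : tr' (a * E (k + 1) * b) = d⁻¹ * tr' (b * a) := by
          rw [h2' (a * E (k + 1)) b, ← mul_assoc]
          exact h3' (k + 2) hm2 hmn (b * a) hba
        rw [e1, e2, IH hk' (b * a) hba]
      | zero => rw [map_zero, map_zero]
      | add x y hx hy ihx ihy => rw [map_add, map_add, ihx, ihy]
      | smul c x hx ihx => rw [map_smul, map_smul, ihx]
  exact main (n - 1) le_rfl
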